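/- Let T be a tree on n ≥ 3 vertices in which every vertex is a leaf or a support vertex. Then there exists a leaf v ∈ V(T) such that in T − v every vertex is again a leaf or a support vertex. -/

import Mathlib

open scoped symmDiff

/-- A locating-dominating (LD) set: every non-detector is dominated, and
distinct non-detectors have distinct neighborhood traces on `S`. -/
def IsLDSet {V : Type*} (G : SimpleGraph V) (S : Set V) : Prop :=
  (∀ v ∉ S, (G.neighborSet v ∩ S).Nonempty) ∧
    ∀ u ∉ S, ∀ v ∉ S, u ≠ v → G.neighborSet u ∩ S ≠ G.neighborSet v ∩ S

/-- A redundant locating-dominating (RED:LD) set. -/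
def IsRedLDSet {V : Type*} (G : SimpleGraph V) (S : Set V) : Prop :=
  IsLDSet G S ∧ ∀ v ∈ S, IsLDSet G (S \ {v})

/-- A leaf is a vertex of degree 1. -/
def IsLeaf {V : Type*} (G : SimpleGraph V) (v : V) : Prop :=
  (G.neighborSet v).ncard = 1

/-- A support vertex is a vertex adjacent to a leaf. -/
def IsSupport {V : Type*} (G : SimpleGraph V) (v : V) : Prop :=
  ∃ u, G.Adj v u ∧ IsLeaf G u
set_option linter.unusedSectionVars false

section Aux

variable {V : Type*} [Fintype V] {G : SimpleGraph V}

lemma leaf_neighborSet_eq {v s : V} (hv : IsLeaf G v) (h : G.Adj v s) :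
    G.neighborSet v = {s} := by
  obtain ⟨a, ha⟩ := Set.ncard_eq_one.mp hv
  have : s ∈ G.neighborSet v := h
  rw [ha] at this ⊢
  simp_all

lemma adj_leaf_eq {v s x : V} (hv : IsLeaf G v) (h : G.Adj v s) (hx : G.Adj x v) :
    x = s := by
  have : x ∈ G.neighborSet v := hx.symm
  rwa [leaf_neighborSet_eq hv h, Set.mem_singleton_iff] at this

/-- In a connected graph with at least 3 vertices there are no two adjacent leaves. -/
lemma no_adjacent_leaves (hc : G.Connected) (hn : 3 ≤ Fintype.card V)
    {v s : V} (hv : IsLeaf G v) (hs : IsLeaf G s) (h : G.Adj v s) : False := by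
  classical
  have key : ∀ {a w : V} (_ : G.Walk a w), (a = v ∨ a = s) → (w = v ∨ w = s) := by
    intro a w p
    induction p with
    | nil => exact id
    | cons hadj q ih =>
      rename_i u b c
      intro ha
      apply ih
      rcases ha with rfl | rfl
      · right; exact adj_leaf_eq hv h hadj.symm
      · left; exact adj_leaf_eq hs h.symm hadj.symm
  have hall : ∀ w : V, w = v ∨ w = s := fun w =>
    key (hc.preconnected v w).some (Or.inl rfl)
  have : (Finset.univ : Finset V) ⊆ {v, s} := fun w _ => by
    rcases hall w with rfl | rfl <;> simp
  have hcard := Finset.card_le_card this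
  simp only [Finset.card_univ] at hcard
  have : ({v, s} : Finset V).card ≤ 2 := Finset.card_insert_le _ _ |>.trans (by simp)
  omega

lemma ncard_eq_degree [DecidableRel G.Adj] (v : V) :
    (G.neighborSet v).ncard = G.degree v := by
  rw [SimpleGraph.degree, SimpleGraph.neighborFinset, Set.ncard_eq_toFinset_card']

lemma induce_ncard (S : Set V) (x : S) :
    ((G.induce S).neighborSet x).ncard = (G.neighborSet ↑x ∩ S).ncard := by
  have himg : Subtype.val '' ((G.induce S).neighborSet x) = G.neighborSet ↑x ∩ S := by
    ext y
    constructor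
    · rintro ⟨⟨y, hyS⟩, hadj, rfl⟩
      exact ⟨hadj, hyS⟩
    · rintro ⟨hadj, hyS⟩
      exact ⟨⟨y, hyS⟩, hadj, rfl⟩
  rw [← himg, Set.ncard_image_of_injective _ Subtype.val_injective]

/-- Key existence: a leaf whose support has another leaf or has degree 2. -/
lemma key_exists (hT : G.IsTree) (hn : 3 ≤ Fintype.card V)
    (hall : ∀ v : V, IsLeaf G v ∨ IsSupport G v) :
    ∃ v s : V, IsLeaf G v ∧ G.Adj s v ∧
      ((∃ u, u ≠ v ∧ IsLeaf G u ∧ G.Adj s u) ∨ (G.neighborSet s).ncard = 2) := by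
  classical
  by_contra hno
  push_neg at hno
  -- every non-leaf has degree ≥ 3
  have hdeg3 : ∀ b : V, ¬ IsLeaf G b → 3 ≤ (G.neighborSet b).ncard := by
    intro b hb
    obtain ⟨u, hbu, hu⟩ := (hall b).resolve_left hb
    have h2 := hno u b hu hbu
    have hne1 : (G.neighborSet b).ncard ≠ 1 := hb
    have hne2 : (G.neighborSet b).ncard ≠ 2 := h2.2
    have hpos : 0 < (G.neighborSet b).ncard :=
      (Set.ncard_pos (Set.toFinite _)).mpr ⟨u, hbu⟩
    omega
  set A : Finset V := Finset.univ.filter (fun x => IsLeaf G x) with hA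
  set B : Finset V := Finset.univ.filter (fun x => ¬ IsLeaf G x) with hB
  have hAB : A.card + B.card = Fintype.card V := by
    rw [hA, hB]
    simpa using Finset.card_filter_add_card_filter_not
      (s := (Finset.univ : Finset V)) (p := fun x => IsLeaf G x)
  -- the support map is injective from leaves to non-leaves
  have hnb : ∀ v : V, IsLeaf G v → ∃ s, G.Adj v s := by
    intro v h
    obtain ⟨a, ha⟩ := Set.ncard_eq_one.mp h
    refine ⟨a, ?_⟩
    have : a ∈ G.neighborSet v := by rw [ha]; exact rfl
    exact this
  choose f hfadj using hnb
  set g : V → V := fun v => if h : IsLeaf G v then f v h else v with hg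
  have hgadj : ∀ (v : V) (h : IsLeaf G v), G.Adj v (g v) := by
    intro v h
    rw [hg]; simp only [dif_pos h]; exact hfadj v h
  have hcardAB : A.card ≤ B.card := by
    apply Finset.card_le_card_of_injOn g
    · intro v hv
      rw [Finset.mem_coe, hA, Finset.mem_filter] at hv
      rw [Finset.mem_coe, hB, Finset.mem_filter]
      refine ⟨Finset.mem_univ _, fun hleaf => ?_⟩
      exact no_adjacent_leaves hT.isConnected hn hv.2 hleaf (hgadj v hv.2)
    · intro v1 hv1 v2 hv2 hfeq
      rw [Finset.mem_coe, hA, Finset.mem_filter] at hv1 hv2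
      by_contra hne
      have hadj1 : G.Adj (g v2) v1 := hfeq ▸ (hgadj v1 hv1.2).symm
      exact (hno v2 (g v2) hv2.2 (hgadj v2 hv2.2).symm).1 v1 hne hv1.2 hadj1
  -- degree sum
  have hsum : ∑ x : V, (G.neighborSet x).ncard = 2 * (Fintype.card V - 1) := by
    have := G.sum_degrees_eq_twice_card_edges
    have hedge := hT.card_edgeFinset
    calc ∑ x : V, (G.neighborSet x).ncard = ∑ x : V, G.degree x := by
          refine Finset.sum_congr rfl fun x _ => ncard_eq_degree x
      _ = 2 * G.edgeFinset.card := this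
      _ = 2 * (Fintype.card V - 1) := by omega
  have hsplit : ∑ x : V, (G.neighborSet x).ncard
      = ∑ x ∈ A, (G.neighborSet x).ncard + ∑ x ∈ B, (G.neighborSet x).ncard := by
    rw [hA, hB]
    exact (Finset.sum_filter_add_sum_filter_not _ _ _).symm
  have hsumA : ∑ x ∈ A, (G.neighborSet x).ncard = A.card := by
    rw [Finset.sum_congr rfl (fun x hx => ?_), Finset.sum_const, smul_eq_mul, mul_one]
    rw [hA, Finset.mem_filter] at hx
    exact hx.2
  have hsumB : 3 * B.card ≤ ∑ x ∈ B, (G.neighborSet x).ncard := by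
    calc 3 * B.card = ∑ _x ∈ B, 3 := by rw [Finset.sum_const, smul_eq_mul, mul_comm]
      _ ≤ ∑ x ∈ B, (G.neighborSet x).ncard := by
          refine Finset.sum_le_sum fun x hx => ?_
          rw [hB, Finset.mem_filter] at hx
          exact hdeg3 x hx.2
  omega

end Aux

theorem stmt16 {V : Type*} [Fintype V] (G : SimpleGraph V) (hT : G.IsTree)
    (hn : 3 ≤ Fintype.card V) (hall : ∀ v : V, IsLeaf G v ∨ IsSupport G v) :
    ∃ v : V, IsLeaf G v ∧
      ∀ x : ({w : V | w ≠ v} : Set V),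
        IsLeaf (G.induce {w : V | w ≠ v}) x ∨ IsSupport (G.induce {w : V | w ≠ v}) x := by
  classical
  obtain ⟨v, s, hvleaf, hsv, hcase⟩ := key_exists hT hn hall
  set S : Set V := {w : V | w ≠ v} with hS
  -- anyone adjacent to v equals s
  have hadj_v : ∀ {x : V}, G.Adj x v → x = s := fun hx => adj_leaf_eq hvleaf hsv.symm hx
  -- neighbor sets intersected with S
  have hinter : ∀ x : V, G.neighborSet x ∩ S = G.neighborSet x \ {v} := by
    intro x; ext y; simp [hS, Set.mem_diff, and_comm]
  have hpres : ∀ x : V, x ≠ s → G.neighborSet x ∩ S = G.neighborSet x := by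
    intro x hx
    rw [hinter]
    refine Set.diff_singleton_eq_self fun hv' => hx (hadj_v hv')
  -- a leaf other than s stays a leaf in the induced graph
  have hleaf_pres : ∀ (u : V) (hu : u ∈ S), IsLeaf G u → u ≠ s →
      IsLeaf (G.induce S) ⟨u, hu⟩ := by
    intro u hu hul hus
    unfold IsLeaf
    rw [induce_ncard, hpres u hus]
    exact hul
  refine ⟨v, hvleaf, fun x => ?_⟩
  by_cases hxs : (x : V) = s
  · -- x = s
    rcases hcase with ⟨u, huv, hul, hsu⟩ | hdeg2
    · right
      have hus : u ≠ s := fun h => G.irrefl (h ▸ hsu)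
      refine ⟨⟨u, huv⟩, ?_, hleaf_pres u huv hul hus⟩
      show G.Adj (x : V) u
      rw [hxs]; exact hsu
    · left
      unfold IsLeaf
      rw [induce_ncard, hxs, hinter]
      have hv_mem : v ∈ G.neighborSet s := hsv
      rw [Set.ncard_diff_singleton_of_mem hv_mem, hdeg2]
  · -- x ≠ s : its neighborhood is untouched
    rcases hall (x : V) with hxl | ⟨u, hxu, hul⟩
    · left
      exact hleaf_pres (x : V) x.2 hxl hxs
    · right
      have huv : u ≠ v := fun h => hxs (hadj_v (h ▸ hxu))
      have hus : u ≠ s := by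
        rintro rfl
        exact no_adjacent_leaves hT.isConnected hn hvleaf hul hsv.symm
      exact ⟨⟨u, huv⟩, hxu, hleaf_pres u huv hul hus⟩
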